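/- Let n ≥ 1 and T > 0. Let u : ℝⁿ × [0,T] → ℝ be a smooth positive solution of the heat equation ∂ₜu = Δu on ℝⁿ × [0,T]. Then the function w(x,t) := ‖∇u(x,t)‖² / u(x,t) satisfies the identity Δw − ∂ₜw = (2/u) · Σ_{i,j} (∂ᵢ∂ⱼu − (∂ᵢu)(∂ⱼu)/u)², and in particular Δw − ∂ₜw ≥ 0, i.e. w is a subsolution of the heat equation. -/

import Mathlib

open Set

/-- The Laplacian of `f : ℝⁿ → ℝ` (flat Euclidean metric): the trace of the
second derivative, i.e. the sum of the second partial derivatives. -/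
noncomputable def lap {n : ℕ} (f : EuclideanSpace ℝ (Fin n) → ℝ)
    (x : EuclideanSpace ℝ (Fin n)) : ℝ :=
  ∑ i : Fin n,
    fderiv ℝ (fun y => fderiv ℝ f y (EuclideanSpace.single i 1)) x
      (EuclideanSpace.single i 1)

noncomputable def pd {n : ℕ} (i : Fin n) (f : EuclideanSpace ℝ (Fin n) → ℝ)
    (x : EuclideanSpace ℝ (Fin n)) : ℝ :=
  fderiv ℝ f x (EuclideanSpace.single i 1)


lemma one_le_ctop : ((⊤:ℕ∞) : WithTop ℕ∞) ≠ 0 := by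
  simp

variable {n : ℕ} {f g h : EuclideanSpace ℝ (Fin n) → ℝ} {x : EuclideanSpace ℝ (Fin n)} {i j : Fin n}

lemma pd_contDiff (hf : ContDiff ℝ (⊤:ℕ∞) f) : ContDiff ℝ (⊤:ℕ∞) (pd i f) :=
  (hf.fderiv_right (m := (⊤:ℕ∞)) (by exact_mod_cast le_rfl)).clm_apply contDiff_const

lemma pd_differentiableAt (hf : ContDiff ℝ (⊤:ℕ∞) f) : DifferentiableAt ℝ (pd i f) x :=
  ((pd_contDiff hf).differentiable one_le_ctop).differentiableAt

lemma pd_pd_eq (hf : ContDiff ℝ (⊤:ℕ∞) f) :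
    pd i (pd j f) x
      = fderiv ℝ (fderiv ℝ f) x (EuclideanSpace.single i 1) (EuclideanSpace.single j 1) := by
  have hd : DifferentiableAt ℝ (fderiv ℝ f) x :=
    ((hf.fderiv_right (m := (⊤:ℕ∞)) (by exact_mod_cast le_rfl)).differentiable one_le_ctop) x
  have H := hd.hasFDerivAt.clm_apply (hasFDerivAt_const (EuclideanSpace.single j (1:ℝ)) x)
  have hpj : pd j f = fun y => fderiv ℝ f y (EuclideanSpace.single j 1) := rfl
  show fderiv ℝ (pd j f) x (EuclideanSpace.single i 1) = _
  rw [hpj, H.fderiv]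
  simp

lemma pd_comm (hf : ContDiff ℝ (⊤:ℕ∞) f) : pd i (pd j f) x = pd j (pd i f) x := by
  rw [pd_pd_eq hf, pd_pd_eq hf]
  exact (hf.contDiffAt.isSymmSndFDerivAt
    (by rw [minSmoothness_of_isRCLikeNormedField, show ((2:WithTop ℕ∞)) = ((2:ℕ∞) : WithTop ℕ∞) from rfl]
        exact WithTop.coe_le_coe.2 le_top)) _ _

lemma pd_congr (hgh : g = h) : pd i g x = pd i h x := by rw [hgh]

lemma pd_add (hg : DifferentiableAt ℝ g x) (hh : DifferentiableAt ℝ h x) :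
    pd i (fun y => g y + h y) x = pd i g x + pd i h x := by
  simp only [pd]; rw [fderiv_fun_add hg hh]; simp

lemma pd_sub (hg : DifferentiableAt ℝ g x) (hh : DifferentiableAt ℝ h x) :
    pd i (fun y => g y - h y) x = pd i g x - pd i h x := by
  simp only [pd]; rw [fderiv_fun_sub hg hh]; simp

lemma pd_mul (hg : DifferentiableAt ℝ g x) (hh : DifferentiableAt ℝ h x) :
    pd i (fun y => g y * h y) x = pd i g x * h x + g x * pd i h x := by
  simp only [pd]; rw [fderiv_fun_mul hg hh]; simp; ring

lemma pd_const_mul (c : ℝ) (hg : DifferentiableAt ℝ g x) :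
    pd i (fun y => c * g y) x = c * pd i g x := by
  simp only [pd]; rw [fderiv_const_mul hg]; simp

lemma pd_inv (hh : DifferentiableAt ℝ h x) (hne : h x ≠ 0) :
    pd i (fun y => (h y)⁻¹) x = -pd i h x / h x ^ 2 := by
  have H := (hasDerivAt_inv hne).comp_hasFDerivAt x hh.hasFDerivAt
  have H' : HasFDerivAt (fun y => (h y)⁻¹) (-(h x ^ 2)⁻¹ • fderiv ℝ h x) x := H
  simp only [pd]
  rw [H'.fderiv]
  simp
  ring

lemma pd_div (hg : DifferentiableAt ℝ g x) (hh : DifferentiableAt ℝ h x) (hne : h x ≠ 0) :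
    pd i (fun y => g y / h y) x = (pd i g x * h x - g x * pd i h x) / h x ^ 2 := by
  have e1 : (fun y => g y / h y) = fun y => g y * (h y)⁻¹ := by
    funext y; rw [div_eq_mul_inv]
  rw [pd_congr e1, pd_mul (h := fun y => (h y)⁻¹) hg (hh.inv hne), pd_inv hh hne]
  field_simp
  ring

lemma pd_sum {m : ℕ} {F : Fin m → EuclideanSpace ℝ (Fin n) → ℝ}
    (hF : ∀ k, DifferentiableAt ℝ (F k) x) :
    pd i (fun y => ∑ k, F k y) x = ∑ k, pd i (F k) x := by
  simp only [pd]; rw [fderiv_fun_sum (fun k _ => hF k)]; simp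

lemma pd_sq (hg : DifferentiableAt ℝ g x) :
    pd i (fun y => g y ^ 2) x = 2 * g x * pd i g x := by
  have e1 : (fun y => g y ^ 2) = fun y => g y * g y := by funext y; ring
  rw [pd_congr e1, pd_mul hg hg]; ring

lemma lap_w (hf : ContDiff ℝ (⊤:ℕ∞) f) (hfp : ∀ y, 0 < f y) :
    lap (fun y => (∑ k, pd k f y ^ 2) / f y) x
    = ∑ i, ((∑ k, (2 * pd i (pd k f) x ^ 2 + 2 * pd k f x * pd k (pd i (pd i f)) x)) / f x
        - (∑ k, pd k f x ^ 2) * pd i (pd i f) x / f x ^ 2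
        - 4 * (∑ k, pd i f x * pd k f x * pd i (pd k f) x) / f x ^ 2
        + 2 * (∑ k, pd k f x ^ 2) * pd i f x ^ 2 / f x ^ 3) := by
  have hfd : ∀ y, DifferentiableAt ℝ f y := fun y => (hf.differentiable one_le_ctop) y
  set v : EuclideanSpace ℝ (Fin n) → ℝ := fun y => ∑ k, pd k f y ^ 2 with hv_def
  have hvCD : ContDiff ℝ (⊤:ℕ∞) v := by
    apply ContDiff.sum (fun k _ => ?_)
    exact (pd_contDiff hf).pow 2
  have hvd : ∀ y, DifferentiableAt ℝ v y := fun y => (hvCD.differentiable one_le_ctop) y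
  have hpdv : ∀ (j : Fin n) (y), pd j v y = ∑ k, 2 * pd k f y * pd j (pd k f) y := by
    intro j y
    rw [hv_def, pd_sum (F := fun k y => pd k f y ^ 2)
      (fun k => ((pd_contDiff hf).pow 2).differentiable one_le_ctop y)]
    exact Finset.sum_congr rfl fun k _ => pd_sq (pd_differentiableAt hf)
  have hW : ∀ (j : Fin n) (y), pd j (fun z => v z / f z) y
      = (pd j v y * f y - v y * pd j f y) / f y ^ 2 := by
    intro j y
    exact pd_div (hvd y) (hfd y) (hfp y).ne'
  show ∑ i, pd i (pd i (fun z => v z / f z)) x = _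
  refine Finset.sum_congr rfl fun i _ => ?_
  have hfne : f x ≠ 0 := (hfp x).ne'
  have hpdvCD : ContDiff ℝ (⊤:ℕ∞) (pd i v) := pd_contDiff hvCD
  have h2v : pd i (pd i v) x
      = ∑ k, (2 * pd i (pd k f) x * pd i (pd k f) x
          + 2 * pd k f x * pd i (pd i (pd k f)) x) := by
    have e1 : pd i v = fun y => ∑ k, 2 * pd k f y * pd i (pd k f) y := by
      funext y; exact hpdv i y
    rw [e1, pd_sum (F := fun k y => 2 * pd k f y * pd i (pd k f) y)
      (fun k => ((contDiff_const.mul (pd_contDiff hf)).mul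
        (pd_contDiff (pd_contDiff hf))).differentiable one_le_ctop x)]
    refine Finset.sum_congr rfl fun k _ => ?_
    have hg : DifferentiableAt ℝ (fun y => 2 * pd k f y) x :=
      (contDiff_const.mul (pd_contDiff hf)).differentiable one_le_ctop x
    have hh : DifferentiableAt ℝ (pd i (pd k f)) x :=
      pd_differentiableAt (pd_contDiff hf)
    rw [pd_mul hg hh, pd_const_mul 2 (pd_differentiableAt hf)]
  have h3 : ∀ k : Fin n, pd i (pd i (pd k f)) x = pd k (pd i (pd i f)) x := by
    intro k
    have e1 : pd i (pd k f) = pd k (pd i f) := by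
      funext y; exact pd_comm hf
    rw [e1]
    exact pd_comm (pd_contDiff hf)
  have h2v' : pd i (pd i v) x
      = ∑ k, (2 * pd i (pd k f) x ^ 2 + 2 * pd k f x * pd k (pd i (pd i f)) x) := by
    rw [h2v]
    refine Finset.sum_congr rfl fun k _ => ?_
    rw [h3 k]; ring
  have e2 : pd i (fun z => v z / f z) = fun y => (pd i v y * f y - v y * pd i f y) / f y ^ 2 := by
    funext y; exact hW i y
  rw [e2]
  have hnum : DifferentiableAt ℝ (fun y => pd i v y * f y - v y * pd i f y) x :=
    ((pd_differentiableAt hvCD).mul (hfd x)).sub ((hvd x).mul (pd_differentiableAt hf))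
  have hden : DifferentiableAt ℝ (fun y => f y ^ 2) x := (hfd x).pow 2
  rw [pd_div hnum hden (by positivity)]
  rw [pd_sub (g := fun y => pd i v y * f y) (h := fun y => v y * pd i f y) ((pd_differentiableAt hvCD).mul (hfd x)) ((hvd x).mul (pd_differentiableAt hf))]
  rw [pd_mul (pd_differentiableAt hvCD) (hfd x)]
  rw [pd_mul (hvd x) (pd_differentiableAt hf)]
  rw [pd_sq (hfd x)]
  rw [h2v', hpdv i x]
  have e3 : ∑ k, 2 * pd k f x * pd i (pd k f) x = 2 * ∑ k, pd k f x * pd i (pd k f) x := by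
    simp [Finset.mul_sum, mul_assoc]
  have e4 : ∑ k, pd i f x * pd k f x * pd i (pd k f) x
      = pd i f x * ∑ k, pd k f x * pd i (pd k f) x := by
    simp [Finset.mul_sum, mul_assoc]
  rw [e3, e4]
  have hvx : v x = ∑ k, pd k f x ^ 2 := rfl
  rw [hvx]
  field_simp
  ring

lemma grad_sq (g : EuclideanSpace ℝ (Fin n) → ℝ) (y : EuclideanSpace ℝ (Fin n)) :
    ‖gradient g y‖ ^ 2 = ∑ i, pd i g y ^ 2 := by
  have e0 : ∀ i, gradient g y i = pd i g y := by
    intro i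
    have h1 : (inner ℝ (gradient g y) (EuclideanSpace.single i (1:ℝ)) : ℝ)
        = fderiv ℝ g y (EuclideanSpace.single i 1) := by
      rw [gradient]
      exact InnerProductSpace.toDual_symm_apply
    rw [EuclideanSpace.inner_single_right] at h1
    simpa [pd] using h1
  rw [EuclideanSpace.norm_eq]
  rw [Real.sq_sqrt (by positivity)]
  exact Finset.sum_congr rfl fun i _ => by rw [e0 i]; simp

lemma alg_key (m : ℕ) (c : ℝ) (hc : c ≠ 0) (p : Fin m → ℝ) (q X : Fin m → Fin m → ℝ) :
    ∑ i, ((∑ k, (2 * q i k ^ 2 + 2 * p k * X i k)) / c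
        - (∑ k, p k ^ 2) * q i i / c ^ 2
        - 4 * (∑ k, p i * p k * q i k) / c ^ 2
        + 2 * (∑ k, p k ^ 2) * p i ^ 2 / c ^ 3)
      - ((2 * ∑ k, p k * ∑ i, X i k) * c - (∑ k, p k ^ 2) * (∑ i, q i i)) / c ^ 2
    = (2 / c) * ∑ i, ∑ k, (q i k - p i * p k / c) ^ 2 := by
  have hRHS : (2 / c) * ∑ i, ∑ k, (q i k - p i * p k / c) ^ 2
      = (∑ i, ∑ k, q i k ^ 2) * (2/c) + (∑ i, ∑ k, p i * p k * q i k) * (-4/c^2)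
        + (∑ i, ∑ k, p i ^ 2 * p k ^ 2) * (2/c^3) := by
    simp only [Finset.mul_sum, Finset.sum_mul, ← Finset.sum_add_distrib]
    refine Finset.sum_congr rfl fun i _ => Finset.sum_congr rfl fun k _ => ?_
    field_simp
    ring
  rw [hRHS]
  have d1 : ∑ i, ∑ k, p i ^ 2 * p k ^ 2 = (∑ k, p k ^ 2) * (∑ k, p k ^ 2) := by
    rw [Finset.sum_mul_sum]
  have d2 : ∀ i, ∑ k, (2 * q i k ^ 2 + 2 * p k * X i k)
      = 2 * (∑ k, q i k ^ 2) + 2 * (∑ k, p k * X i k) := by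
    intro i; simp [Finset.sum_add_distrib, Finset.mul_sum, mul_assoc]
  have d3 : ∑ i, ∑ k, p k * X i k = ∑ k, p k * ∑ i, X i k := by
    rw [Finset.sum_comm]; simp [Finset.mul_sum]
  have d4 : ∀ i ∈ (Finset.univ : Finset (Fin m)),
      (∑ k, (2 * q i k ^ 2 + 2 * p k * X i k)) / c
        - (∑ k, p k ^ 2) * q i i / c ^ 2
        - 4 * (∑ k, p i * p k * q i k) / c ^ 2
        + 2 * (∑ k, p k ^ 2) * p i ^ 2 / c ^ 3
      = (∑ k, q i k ^ 2) * (2/c) + (∑ k, p k * X i k) * (2/c)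
        + q i i * (-(∑ k, p k ^ 2)/c^2) + (∑ k, p i * p k * q i k) * (-4/c^2)
        + p i ^ 2 * (2*(∑ k, p k ^ 2)/c^3) := by
    intro i _
    rw [d2 i]
    field_simp
    ring
  rw [Finset.sum_congr rfl d4]
  simp only [Finset.sum_add_distrib, ← Finset.sum_mul]
  rw [d3, d1]
  field_simp
  ring

/-- For a smooth positive solution `u` of the heat equation on ℝⁿ × [0,T], the
function `w = ‖∇u‖²/u` satisfies
`Δw − ∂ₜw = (2/u)·Σ_{i,j} (∂ᵢ∂ⱼu − ∂ᵢu ∂ⱼu/u)² ≥ 0`, i.e. `w` is a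
subsolution of the heat equation. -/
theorem heat_gradsq_over_u_subsolution
    (n : ℕ) (hn : 1 ≤ n) (T : ℝ) (hT : 0 < T)
    (u : EuclideanSpace ℝ (Fin n) → ℝ → ℝ)
    (hsmooth : ContDiffOn ℝ (⊤ : ℕ∞)
      (fun p : EuclideanSpace ℝ (Fin n) × ℝ => u p.1 p.2) (univ ×ˢ Icc 0 T))
    (hpos : ∀ x, ∀ t ∈ Icc (0 : ℝ) T, 0 < u x t)
    (hheat : ∀ x, ∀ t ∈ Icc (0 : ℝ) T,
      derivWithin (fun s => u x s) (Icc 0 T) t = lap (fun y => u y t) x) :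
    ∀ x, ∀ t ∈ Icc (0 : ℝ) T,
      (lap (fun y => ‖gradient (fun z => u z t) y‖ ^ 2 / u y t) x
          - derivWithin (fun s => ‖gradient (fun z => u z s) x‖ ^ 2 / u x s)
              (Icc 0 T) t
        = (2 / u x t) *
            ∑ i : Fin n, ∑ j : Fin n,
              (fderiv ℝ
                  (fun y => fderiv ℝ (fun z => u z t) y (EuclideanSpace.single j 1))
                  x (EuclideanSpace.single i 1)
                - fderiv ℝ (fun z => u z t) x (EuclideanSpace.single i 1)
                    * fderiv ℝ (fun z => u z t) x (EuclideanSpace.single j 1)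
                    / u x t) ^ 2)
      ∧ 0 ≤ lap (fun y => ‖gradient (fun z => u z t) y‖ ^ 2 / u y t) x
          - derivWithin (fun s => ‖gradient (fun z => u z s) x‖ ^ 2 / u x s)
              (Icc 0 T) t := by
  intro x t ht
  have hSu : UniqueDiffOn ℝ ((univ : Set (EuclideanSpace ℝ (Fin n))) ×ˢ Icc (0:ℝ) T) :=
    uniqueDiffOn_univ.prod (uniqueDiffOn_Icc hT)
  set S : Set (EuclideanSpace ℝ (Fin n) × ℝ) := univ ×ˢ Icc 0 T with hS_def
  set U : EuclideanSpace ℝ (Fin n) × ℝ → ℝ := fun p => u p.1 p.2 with hU_def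
  have hmem : ∀ (y : EuclideanSpace ℝ (Fin n)) (s : ℝ), s ∈ Icc (0:ℝ) T → (y, s) ∈ S :=
    fun y s hs => ⟨mem_univ y, hs⟩
  set G := fderivWithin ℝ U S with hG_def
  set H := fderivWithin ℝ G S with hH_def
  have hUc : ContDiffOn ℝ (⊤:ℕ∞) U S := hsmooth
  have hUd : DifferentiableOn ℝ U S := hUc.differentiableOn one_le_ctop
  have hGc : ContDiffOn ℝ (⊤:ℕ∞) G S := hUc.fderivWithin hSu (by exact_mod_cast le_rfl)
  have hGd : DifferentiableOn ℝ G S := hGc.differentiableOn one_le_ctop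
  have hGf : ∀ p ∈ S, HasFDerivWithinAt U (G p) S p := fun p hp => (hUd p hp).hasFDerivWithinAt
  have hHf : ∀ p ∈ S, HasFDerivWithinAt G (H p) S p := fun p hp => (hGd p hp).hasFDerivWithinAt
  have hsym : ∀ (y : EuclideanSpace ℝ (Fin n)), ∀ s ∈ Icc (0:ℝ) T,
      ∀ a b : EuclideanSpace ℝ (Fin n) × ℝ, H (y,s) a b = H (y,s) b a := by
    intro y s hs a b
    have hcl : (y,s) ∈ closure (interior S) := by
      rw [hS_def, interior_prod_eq, closure_prod_eq, interior_univ, closure_univ, interior_Icc,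
        closure_Ioo hT.ne]
      exact ⟨mem_univ y, hs⟩
    exact ((hUc (y,s) (hmem y s hs)).isSymmSndFDerivWithinAt
      (by rw [minSmoothness_of_isRCLikeNormedField, show ((2:WithTop ℕ∞)) = ((2:ℕ∞) : WithTop ℕ∞) from rfl]
          exact WithTop.coe_le_coe.2 le_top)
      hSu hcl (hmem y s hs)) a b
  -- spatial slice
  have hspace : ∀ (y : EuclideanSpace ℝ (Fin n)) (s : ℝ), s ∈ Icc (0:ℝ) T →
      ∀ m : EuclideanSpace ℝ (Fin n), fderiv ℝ (fun z => u z s) y m = G (y,s) (m, 0) := by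
    intro y s hs m
    have hι : HasFDerivAt (fun z : EuclideanSpace ℝ (Fin n) => (z, s))
        ((ContinuousLinearMap.id ℝ (EuclideanSpace ℝ (Fin n))).prod 0) y :=
      (hasFDerivAt_id y).prodMk (hasFDerivAt_const s y)
    have hcomp := (hGf (y,s) (hmem y s hs)).comp y (hι.hasFDerivWithinAt (s := univ))
      (fun z _ => hmem z s hs)
    rw [hasFDerivWithinAt_univ] at hcomp
    have hcomp' : HasFDerivAt (fun z => u z s)
        ((G (y,s)).comp ((ContinuousLinearMap.id ℝ (EuclideanSpace ℝ (Fin n))).prod 0)) y :=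
      hcomp
    rw [hcomp'.fderiv]
    simp
  -- time slice
  have htime : ∀ (y : EuclideanSpace ℝ (Fin n)) (s : ℝ), s ∈ Icc (0:ℝ) T →
      HasDerivWithinAt (fun r => u y r) (G (y,s) (0,1)) (Icc 0 T) s := by
    intro y s hs
    have hι : HasDerivWithinAt (fun r : ℝ => ((y, r) : EuclideanSpace ℝ (Fin n) × ℝ))
        ((0 : EuclideanSpace ℝ (Fin n)), (1:ℝ)) (Icc 0 T) s :=
      (hasDerivWithinAt_const s (Icc 0 T) y).prodMk (hasDerivWithinAt_id s (Icc 0 T))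
    exact (hGf (y,s) (hmem y s hs)).comp_hasDerivWithinAt s hι (fun r hr => hmem y r hr)
  have htime' : ∀ (y : EuclideanSpace ℝ (Fin n)) (s : ℝ) (hs : s ∈ Icc (0:ℝ) T),
      derivWithin (fun r => u y r) (Icc 0 T) s = G (y,s) (0,1) :=
    fun y s hs => (htime y s hs).derivWithin ((uniqueDiffOn_Icc hT) s hs)
  have hGt : ∀ (y : EuclideanSpace ℝ (Fin n)) (s : ℝ) (hs : s ∈ Icc (0:ℝ) T),
      G (y,s) (0,1) = lap (fun z => u z s) y :=
    fun y s hs => by rw [← htime' y s hs]; exact hheat y s hs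
  -- derivative of G applied to a fixed vector
  have hclm : ∀ (p : EuclideanSpace ℝ (Fin n) × ℝ) (hp : p ∈ S)
      (m : EuclideanSpace ℝ (Fin n) × ℝ),
      HasFDerivWithinAt (fun q => G q m) ((G p).comp 0 + (H p).flip m) S p :=
    fun p hp m => (hHf p hp).clm_apply (hasFDerivWithinAt_const m p S)
  have hmixT : ∀ (s : ℝ) (hs : s ∈ Icc (0:ℝ) T) (m : EuclideanSpace ℝ (Fin n) × ℝ),
      HasDerivWithinAt (fun r => G (x, r) m) (H (x,s) (0,1) m) (Icc 0 T) s := by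
    intro s hs m
    have hι : HasDerivWithinAt (fun r : ℝ => ((x, r) : EuclideanSpace ℝ (Fin n) × ℝ))
        ((0 : EuclideanSpace ℝ (Fin n)), (1:ℝ)) (Icc 0 T) s :=
      (hasDerivWithinAt_const s (Icc 0 T) x).prodMk (hasDerivWithinAt_id s (Icc 0 T))
    have h2 := (hclm (x,s) (hmem x s hs) m).comp_hasDerivWithinAt s hι (fun r hr => hmem x r hr)
    simp at h2; exact h2
  have hmixS : ∀ (s : ℝ) (hs : s ∈ Icc (0:ℝ) T) (m : EuclideanSpace ℝ (Fin n) × ℝ) (k : Fin n),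
      fderiv ℝ (fun y => G (y, s) m) x (EuclideanSpace.single k 1)
        = H (x,s) (EuclideanSpace.single k 1, 0) m := by
    intro s hs m k
    have hι : HasFDerivAt (fun z : EuclideanSpace ℝ (Fin n) => (z, s))
        ((ContinuousLinearMap.id ℝ (EuclideanSpace ℝ (Fin n))).prod 0) x :=
      (hasFDerivAt_id x).prodMk (hasFDerivAt_const s x)
    have h2 := (hclm (x,s) (hmem x s hs) m).comp x (hι.hasFDerivWithinAt (s := univ))
      (fun z _ => hmem z s hs)
    rw [hasFDerivWithinAt_univ] at h2
    have h2' : HasFDerivAt (fun y => G (y, s) m)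
        (((G (x,s)).comp 0 + (H (x,s)).flip m).comp
          ((ContinuousLinearMap.id ℝ (EuclideanSpace ℝ (Fin n))).prod 0)) x := h2
    rw [h2'.fderiv]
    simp
  -- slice smoothness and positivity
  have hslice : ContDiffOn ℝ (⊤:ℕ∞) (fun z : EuclideanSpace ℝ (Fin n) => u z t) univ := by
    exact hUc.comp
      ((contDiff_id.prodMk contDiff_const).contDiffOn :
        ContDiffOn ℝ (⊤:ℕ∞) (fun z : EuclideanSpace ℝ (Fin n) => (z, t)) univ)
      (fun z _ => hmem z t ht)
  set f : EuclideanSpace ℝ (Fin n) → ℝ := fun z => u z t with hf_def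
  have hfCD : ContDiff ℝ (⊤:ℕ∞) f := contDiffOn_univ.mp hslice
  have hfp : ∀ y, 0 < f y := fun y => hpos y t ht
  have hne : u x t ≠ 0 := (hpos x t ht).ne'
  have hmixkey : ∀ k : Fin n,
      H (x,t) (0,1) (EuclideanSpace.single k 1, 0) = pd k (lap f) x := by
    intro k
    rw [hsym x t ht]
    rw [← hmixS t ht (0,1) k]
    have e1 : (fun y => G (y,t) ((0 : EuclideanSpace ℝ (Fin n)),(1:ℝ)))
        = fun y => lap f y := by
      funext y; exact hGt y t ht
    rw [e1]
    rfl
  have hR : ∀ k : Fin n, pd k (lap f) x = ∑ i, pd k (pd i (pd i f)) x := by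
    intro k
    have e : lap f = fun y => ∑ i, pd i (pd i f) y := rfl
    rw [e, pd_sum (F := fun i y => pd i (pd i f) y)
      (fun i => pd_differentiableAt (pd_contDiff hfCD))]
  -- time derivative of w
  have hgradEq : ∀ s ∈ Icc (0:ℝ) T, ‖gradient (fun z => u z s) x‖ ^ 2
      = ∑ k, (G (x,s) (EuclideanSpace.single k 1, 0))^2 := by
    intro s hs
    rw [grad_sq]
    refine Finset.sum_congr rfl fun k _ => ?_
    have := hspace x s hs (EuclideanSpace.single k 1)
    simp only [pd]
    rw [this]
  have hEq : EqOn (fun s => ‖gradient (fun z => u z s) x‖ ^ 2 / u x s)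
      (fun s => (∑ k, (G (x,s) (EuclideanSpace.single k 1, 0))^2) / u x s) (Icc 0 T) := by
    intro s hs; simp only; rw [hgradEq s hs]
  have hk2 : ∀ k : Fin n,
      HasDerivWithinAt (fun s => (G (x,s) (EuclideanSpace.single k 1, 0))^2)
        (2 * pd k f x * (∑ i, pd k (pd i (pd i f)) x)) (Icc 0 T) t := by
    intro k
    have h1 := (hmixT t ht (EuclideanSpace.single k 1, 0)).pow 2
    have e : ((2:ℕ):ℝ) * (G (x,t) (EuclideanSpace.single k 1,0)) ^ (2-1)
          * (H (x,t) (0,1) (EuclideanSpace.single k 1,0))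
        = 2 * pd k f x * (∑ i, pd k (pd i (pd i f)) x) := by
      rw [hmixkey k, hR k, ← hspace x t ht (EuclideanSpace.single k 1)]
      simp only [pd]
      norm_num
      left; rfl
    exact e ▸ h1
  have hnum : HasDerivWithinAt (fun s => ∑ k, (G (x,s) (EuclideanSpace.single k 1, 0))^2)
      (∑ k, 2 * pd k f x * (∑ i, pd k (pd i (pd i f)) x)) (Icc 0 T) t :=
    HasDerivWithinAt.fun_sum (fun k _ => hk2 k)
  have hden : HasDerivWithinAt (fun s => u x s) (∑ i, pd i (pd i f) x) (Icc 0 T) t := by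
    have h1 := htime x t ht
    rw [hGt x t ht] at h1
    exact h1
  have hdiv := hnum.fun_div hden hne
  have g2 : derivWithin (fun s => ‖gradient (fun z => u z s) x‖ ^ 2 / u x s) (Icc 0 T) t
      = ((2 * ∑ k, pd k f x * (∑ i, pd k (pd i (pd i f)) x)) * u x t
          - (∑ k, pd k f x ^ 2) * (∑ i, pd i (pd i f) x)) / u x t ^ 2 := by
    rw [derivWithin_congr hEq (hEq ht)]
    rw [hdiv.derivWithin ((uniqueDiffOn_Icc hT) t ht)]
    have eN : (∑ k, (G (x,t) (EuclideanSpace.single k 1, 0))^2) = ∑ k, pd k f x ^ 2 := by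
      refine Finset.sum_congr rfl fun k _ => ?_
      rw [← hspace x t ht (EuclideanSpace.single k 1)]
      rfl
    have eA : (∑ k, 2 * pd k f x * (∑ i, pd k (pd i (pd i f)) x))
        = 2 * ∑ k, pd k f x * (∑ i, pd k (pd i (pd i f)) x) := by
      simp [Finset.mul_sum, mul_assoc]
    rw [eN, eA]
  have hmain : lap (fun y => ‖gradient (fun z => u z t) y‖ ^ 2 / u y t) x
      - derivWithin (fun s => ‖gradient (fun z => u z s) x‖ ^ 2 / u x s) (Icc 0 T) t
      = (2 / u x t) * ∑ i : Fin n, ∑ j : Fin n,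
          (pd i (pd j f) x - pd i f x * pd j f x / u x t) ^ 2 := by
    have g1 : (fun y => ‖gradient f y‖ ^ 2 / u y t)
        = fun y => (∑ k, pd k f y ^ 2) / f y := by
      funext y; rw [grad_sq]
    rw [g1, lap_w hfCD hfp, g2]
    exact alg_key n (u x t) hne (fun k => pd k f x) (fun i k => pd i (pd k f) x)
      (fun i k => pd k (pd i (pd i f)) x)
  constructor
  · exact hmain
  · rw [show (lap (fun y => ‖gradient (fun z => u z t) y‖ ^ 2 / u y t) x
      - derivWithin (fun s => ‖gradient (fun z => u z s) x‖ ^ 2 / u x s) (Icc 0 T) t : ℝ)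
      = (2 / u x t) * ∑ i : Fin n, ∑ j : Fin n,
          (pd i (pd j f) x - pd i f x * pd j f x / u x t) ^ 2 from hmain]
    exact mul_nonneg (div_nonneg (by norm_num) (hpos x t ht).le)
      (Finset.sum_nonneg fun i _ => Finset.sum_nonneg fun j _ => sq_nonneg _)
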